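/- Let g be a positive definite inner product on ℝⁿ with n ≥ 2, r > 0 and a = 1/(k r²) for some k ≠ 0. Then the identity −(1/(2r²))[g^{jl}(g_{tm}δ^r_i − g_{im}δ^r_t + 2g_{it}δ^r_m) + g_{it}(g^{jr}δ^l_m − g^{lr}δ^j_m)] + (1/r⁴) δ^r_m δ^l_t δ^j_i = 0 cannot hold for all index values. In particular, contracting suitably (e.g. setting i = t, j = l, m = r and summing) leads to a contradiction for any n ≥ 2 and r > 0. -/

import Mathlib

lemma posdef_diag_pos {n : ℕ} {M : Matrix (Fin n) (Fin n) ℝ} (hM : M.PosDef)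
    (i : Fin n) : 0 < M i i := by
  exact hM.diag_pos

/-- The final contradiction in the proof of Theorem 7: the index identity
obtained at the point `t^i_j = δ^i_j` cannot hold for all index values. -/
theorem stmt13 (n : ℕ) (hn : 2 ≤ n)
    (g : Matrix (Fin n) (Fin n) ℝ) (hg : g.PosDef)
    (r k : ℝ) (hr : 0 < r) (hk : k ≠ 0) (a : ℝ) (ha : a = 1 / (k * r ^ 2)) :
    ¬ (∀ i t j l m s : Fin n,
      -(1 / (2 * r ^ 2)) *
        (g⁻¹ j l * (g t m * (if s = i then (1:ℝ) else 0)
            - g i m * (if s = t then (1:ℝ) else 0)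
            + 2 * g i t * (if s = m then (1:ℝ) else 0))
          + g i t * (g⁻¹ j s * (if l = m then (1:ℝ) else 0)
            - g⁻¹ l s * (if j = m then (1:ℝ) else 0)))
      + (1 / r ^ 4) * (if s = m then (1:ℝ) else 0)
          * (if l = t then (1:ℝ) else 0) * (if j = i then (1:ℝ) else 0) = 0) := by
  intro h
  have one_lt : (1 : ℕ) < n := hn
  set i0 : Fin n := ⟨0, by omega⟩
  set i1 : Fin n := ⟨1, by omega⟩
  have hne : i1 ≠ i0 := by simp [i0, i1, Fin.ext_iff]
  have h1 := h i0 i0 i1 i1 i1 i1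
  simp only [if_pos rfl, if_neg hne, if_true] at h1
  have hg00 : 0 < g i0 i0 := posdef_diag_pos hg i0
  have hginv11 : 0 < g⁻¹ i1 i1 := posdef_diag_pos hg.inv i1
  have hr2 : (0:ℝ) < r ^ 2 := by positivity
  nlinarith [mul_pos (show (0:ℝ) < 1/(2*r^2) by positivity) (mul_pos hginv11 hg00)]
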